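/- Let M, n, p be positive natural numbers, let A be a real M×n matrix, B a real M×p matrix, and σ > 0. If A Aᵀ − B Bᵀ is positive semidefinite, then there exists a Markov kernel κ from ℝⁿ (EuclideanSpace ℝ (Fin n)) to ℝᵖ such that for every β ∈ ℝᴹ, the measure obtained by drawing x from the multivariate Gaussian N(Aᵀβ, σ²·Iₙ) and then applying κ (i.e., the bind of N(Aᵀβ, σ²Iₙ) with κ) equals the multivariate Gaussian N(Bᵀβ, σ²·Iₚ). In other words, the linear normal experiment with design matrix A is Blackwell-sufficient for the one with design matrix B. -/

import Mathlib

open Matrix MeasureTheory ProbabilityTheory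

/-- The multivariate Gaussian measure `N(μ, σ² I)` on `EuclideanSpace ℝ (Fin n)`,
defined via its density with respect to Lebesgue measure. -/
noncomputable def gaussianEuclidean (n : ℕ) (μ : EuclideanSpace ℝ (Fin n)) (σ : ℝ) :
    Measure (EuclideanSpace ℝ (Fin n)) :=
  volume.withDensity fun x =>
    ENNReal.ofReal ((2 * Real.pi * σ ^ 2) ^ (-(n : ℝ) / 2) *
      Real.exp (-‖x - μ‖ ^ 2 / (2 * σ ^ 2)))

set_option linter.unusedSectionVars false

namespace BlackwellAux

variable {ι ι' : Type*} [Fintype ι] [Fintype ι']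

/-- centered Gaussian density -/
noncomputable def gdens (ι : Type*) [Fintype ι] (σ : ℝ) (x : EuclideanSpace ℝ ι) : ENNReal :=
  ENNReal.ofReal ((2 * Real.pi * σ ^ 2) ^ (-(Fintype.card ι : ℝ) / 2) *
    Real.exp (-‖x‖ ^ 2 / (2 * σ ^ 2)))

lemma continuous_gdens (σ : ℝ) : Continuous (gdens ι σ) := by
  apply ENNReal.continuous_ofReal.comp
  fun_prop

lemma measurable_gdens (σ : ℝ) : Measurable (gdens ι σ) := (continuous_gdens σ).measurable

/-- standard Gaussian measure with covariance σ² I on a Euclidean space -/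
noncomputable def gauss (ι : Type*) [Fintype ι] (σ : ℝ) : Measure (EuclideanSpace ℝ ι) :=
  volume.withDensity (gdens ι σ)

lemma norm_sq_eq (x : EuclideanSpace ℝ ι) : ‖x‖ ^ 2 = ∑ i, x i ^ 2 := by
  rw [EuclideanSpace.norm_eq, Real.sq_sqrt]
  · simp [sq_abs]
  · positivity

lemma gauss_prob {σ : ℝ} (hσ : 0 < σ) : IsProbabilityMeasure (gauss ι σ) := by
  constructor
  rw [gauss, withDensity_apply _ MeasurableSet.univ, Measure.restrict_univ]
  unfold gdens
  have hb : (0:ℝ) < (2 * σ ^ 2)⁻¹ := by positivity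
  have hexp : ∀ x : EuclideanSpace ℝ ι, Real.exp (-‖x‖ ^ 2 / (2 * σ ^ 2))
      = Real.exp (-(2 * σ ^ 2)⁻¹ * ‖x‖ ^ 2) := by
    intro x; congr 1; field_simp
  have hint : Integrable (fun x : EuclideanSpace ℝ ι =>
      Real.exp (-(2 * σ ^ 2)⁻¹ * ‖x‖ ^ 2)) := by
    have := GaussianFourier.integrable_cexp_neg_mul_sq_norm_add
      (V := EuclideanSpace ℝ ι) (b := ((2 * σ ^ 2)⁻¹ : ℝ))
      (by rwa [Complex.ofReal_re]) 0 0
    have h2 : (fun x : EuclideanSpace ℝ ι => Real.exp (-(2 * σ ^ 2)⁻¹ * ‖x‖ ^ 2))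
        = fun x => (Complex.exp (-(((2 * σ ^ 2)⁻¹ : ℝ) : ℂ) * (‖x‖ : ℂ) ^ 2 +
          0 * (inner ℝ (0 : EuclideanSpace ℝ ι) x : ℝ))).re := by
      funext x
      have hcast : (-(((2 * σ ^ 2)⁻¹ : ℝ) : ℂ) * (‖x‖ : ℂ) ^ 2 +
          0 * ((inner ℝ (0 : EuclideanSpace ℝ ι) x : ℝ) : ℂ))
          = ((-(2 * σ ^ 2)⁻¹ * ‖x‖ ^ 2 : ℝ) : ℂ) := by push_cast; ring
      rw [hcast, ← Complex.ofReal_exp, Complex.ofReal_re]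
    rw [h2]
    exact this.re
  have key : ∫ x : EuclideanSpace ℝ ι, Real.exp (-(2 * σ ^ 2)⁻¹ * ‖x‖ ^ 2)
      = (2 * Real.pi * σ ^ 2) ^ ((Fintype.card ι : ℝ) / 2) := by
    rw [GaussianFourier.integral_rexp_neg_mul_sq_norm hb]
    rw [finrank_euclideanSpace]
    congr 1
    field_simp
  simp_rw [hexp]
  rw [← ofReal_integral_eq_lintegral_ofReal]
  · rw [integral_const_mul, key, ← Real.rpow_add (by positivity), neg_div,
      neg_add_cancel, Real.rpow_zero, ENNReal.ofReal_one]
  · exact hint.const_mul _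
  · filter_upwards with x
    positivity

lemma map_withDensity_eq {E F : Type*} [MeasurableSpace E] [MeasurableSpace F]
    {μ : Measure E} {ν : Measure F} {g : E → F} (hg : MeasurePreserving g μ ν)
    {f : F → ENNReal} (hf : Measurable f) :
    Measure.map g (μ.withDensity (fun x => f (g x))) = ν.withDensity f := by
  ext s hs
  rw [Measure.map_apply hg.measurable hs, withDensity_apply _ (hg.measurable hs),
    withDensity_apply _ hs, ← hg.setLIntegral_comp_preimage hs hf]

lemma gauss_map_add (σ : ℝ) (c : EuclideanSpace ℝ ι) :
    Measure.map (· + c) (gauss ι σ) = volume.withDensity (fun x => gdens ι σ (x - c)) := by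
  have h := map_withDensity_eq (measurePreserving_add_right volume c)
    ((measurable_gdens σ).comp (measurable_sub_const c))
  rw [gauss]
  simpa [add_sub_cancel_right, Function.comp_def] using h

lemma gaussianEuclidean_eq (k : ℕ) (μ : EuclideanSpace ℝ (Fin k)) (σ : ℝ) :
    gaussianEuclidean k μ σ = Measure.map (· + μ) (gauss (Fin k) σ) := by
  rw [gauss_map_add, gaussianEuclidean]
  congr 1
  funext x
  simp [gdens]

lemma gauss_map_isometry (σ : ℝ) (e : EuclideanSpace ℝ ι ≃ₗᵢ[ℝ] EuclideanSpace ℝ ι')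
    (hcard : Fintype.card ι = Fintype.card ι') :
    Measure.map e (gauss ι σ) = gauss ι' σ := by
  have h := map_withDensity_eq (μ := volume) e.measurePreserving (measurable_gdens (ι := ι') σ)
  rw [gauss]
  have h2 : (fun x => gdens ι' σ (e x)) = gdens ι σ := by
    funext x; simp [gdens, e.norm_map, hcard]
  rw [h2] at h
  rw [h]
  rfl

noncomputable def splitFun (a b : ℕ) (x : EuclideanSpace ℝ (Fin (a + b))) :
    EuclideanSpace ℝ (Fin a) × EuclideanSpace ℝ (Fin b) :=
  ((WithLp.equiv 2 (Fin a → ℝ)).symm fun i => x (Fin.castAdd b i),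
   (WithLp.equiv 2 (Fin b → ℝ)).symm fun i => x (Fin.natAdd a i))

lemma volume_preserving_splitFun (a b : ℕ) :
    MeasurePreserving (splitFun a b) volume (Measure.prod volume volume) := by
  have e1 := EuclideanSpace.volume_preserving_symm_measurableEquiv_toLp (Fin (a + b))
  have e2 := (MeasureTheory.volume_measurePreserving_piCongrLeft (fun _ : Fin (a+b) => ℝ)
      finSumFinEquiv).symm (MeasurableEquiv.piCongrLeft (fun _ => ℝ) finSumFinEquiv)
  have e3 := (MeasureTheory.volume_measurePreserving_sumPiEquivProdPi_symm
      (fun _ : Fin a ⊕ Fin b => ℝ)).symm ((MeasurableEquiv.sumPiEquivProdPi _).symm)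
  rw [MeasurableEquiv.symm_symm] at e3
  have e4 := ((EuclideanSpace.volume_preserving_symm_measurableEquiv_toLp (Fin a)).symm
      (MeasurableEquiv.toLp 2 (Fin a → ℝ)).symm).prod
      ((EuclideanSpace.volume_preserving_symm_measurableEquiv_toLp (Fin b)).symm
      (MeasurableEquiv.toLp 2 (Fin b → ℝ)).symm)
  have comp := (e4.comp (e3.comp (e2.comp e1)))
  convert comp using 1
  rfl
  funext x
  rfl

lemma withDensity_prod {α β : Type*} [MeasurableSpace α] [MeasurableSpace β]
    (μ : Measure α) (ν : Measure β) [SigmaFinite μ] [SigmaFinite ν]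
    {f : α → ENNReal} {g : β → ENNReal} (hf : Measurable f) (hg : Measurable g)
    [SigmaFinite (μ.withDensity f)] [SigmaFinite (ν.withDensity g)] :
    (μ.withDensity f).prod (ν.withDensity g)
      = (μ.prod ν).withDensity (fun q => f q.1 * g q.2) := by
  refine Measure.prod_eq fun s t hs ht => ?_
  rw [withDensity_apply _ (hs.prod ht), ← Measure.prod_restrict s t,
    lintegral_prod_mul hf.aemeasurable hg.aemeasurable,
    withDensity_apply _ hs, withDensity_apply _ ht]


lemma gauss_map_splitFun (a b : ℕ) {σ : ℝ} (hσ : 0 < σ) :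
    Measure.map (splitFun a b) (gauss (Fin (a + b)) σ)
      = (gauss (Fin a) σ).prod (gauss (Fin b) σ) := by
  haveI : SigmaFinite ((volume : Measure (EuclideanSpace ℝ (Fin a))).withDensity (gdens (Fin a) σ)) := by
    have := gauss_prob (ι := Fin a) hσ
    exact inferInstanceAs (SigmaFinite (gauss (Fin a) σ))
  haveI : SigmaFinite ((volume : Measure (EuclideanSpace ℝ (Fin b))).withDensity (gdens (Fin b) σ)) := by
    have := gauss_prob (ι := Fin b) hσ
    exact inferInstanceAs (SigmaFinite (gauss (Fin b) σ))
  rw [gauss, gauss, gauss, withDensity_prod volume volume (measurable_gdens σ) (measurable_gdens σ)]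
  have hdens : ∀ x : EuclideanSpace ℝ (Fin (a + b)),
      gdens (Fin (a+b)) σ x = gdens (Fin a) σ (splitFun a b x).1 * gdens (Fin b) σ (splitFun a b x).2 := by
    intro x
    unfold gdens
    rw [← ENNReal.ofReal_mul (by positivity)]
    congr 1
    have hn : ‖x‖^2 = ‖(splitFun a b x).1‖^2 + ‖(splitFun a b x).2‖^2 := by
      rw [norm_sq_eq, norm_sq_eq, norm_sq_eq, Fin.sum_univ_add]
      rfl
    have hc : ((2 * Real.pi * σ ^ 2) ^ (-(Fintype.card (Fin (a+b)) : ℝ) / 2) : ℝ)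
        = (2 * Real.pi * σ ^ 2) ^ (-(Fintype.card (Fin a) : ℝ) / 2)
          * (2 * Real.pi * σ ^ 2) ^ (-(Fintype.card (Fin b) : ℝ) / 2) := by
      rw [← Real.rpow_add (by positivity)]
      congr 1
      simp only [Fintype.card_fin]
      push_cast
      ring
    rw [hc, hn, neg_add, add_div, Real.exp_add]
    ring
  have key := map_withDensity_eq (volume_preserving_splitFun a b)
    (f := fun q : EuclideanSpace ℝ (Fin a) × EuclideanSpace ℝ (Fin b) =>
      gdens (Fin a) σ q.1 * gdens (Fin b) σ q.2)
    (((measurable_gdens σ).comp measurable_fst).mul ((measurable_gdens σ).comp measurable_snd))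
  rw [← key]
  exact congrArg (Measure.map (splitFun a b)) (congrArg volume.withDensity (funext hdens))

lemma gauss_map_fst (a b : ℕ) {σ : ℝ} (hσ : 0 < σ) :
    Measure.map Prod.fst ((gauss (Fin a) σ).prod (gauss (Fin b) σ)) = gauss (Fin a) σ := by
  haveI := gauss_prob (ι := Fin a) hσ
  haveI := gauss_prob (ι := Fin b) hσ
  rw [Measure.map_fst_prod]
  simp

/-- the Euclidean-space incarnation of a vector -/
noncomputable def toE {ι : Type*} [Fintype ι] (v : ι → ℝ) : EuclideanSpace ℝ ι :=
  (WithLp.equiv 2 (ι → ℝ)).symm v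

/-- matrix multiplication as a linear map between Euclidean spaces -/
noncomputable def matVecL (C : Matrix ι' ι ℝ) :
    EuclideanSpace ℝ ι →ₗ[ℝ] EuclideanSpace ℝ ι' :=
  (WithLp.linearEquiv 2 ℝ (ι' → ℝ)).symm.toLinearMap ∘ₗ C.mulVecLin ∘ₗ
    (WithLp.linearEquiv 2 ℝ (ι → ℝ)).toLinearMap

lemma matVecL_apply (C : Matrix ι' ι ℝ) (x : EuclideanSpace ℝ ι) (i : ι') :
    matVecL C x i = ∑ j, C i j * x j := by
  simp [matVecL, Matrix.mulVecLin, Matrix.mulVec, dotProduct]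

lemma continuous_matVecL (C : Matrix ι' ι ℝ) : Continuous (matVecL C) :=
  (matVecL C).continuous_of_finiteDimensional

lemma gauss_map_matVec {p m : ℕ} (hcard : Fintype.card ι = p + m)
    {σ : ℝ} (hσ : 0 < σ) (C : Matrix (Fin p) ι ℝ) (hC : C * Cᵀ = 1) :
    Measure.map (matVecL C) (gauss ι σ) = gauss (Fin p) σ := by
  classical
  set r : Fin p → EuclideanSpace ℝ ι := fun i => toE (fun j => C i j) with hr
  have hortho : Orthonormal ℝ r := by
    rw [orthonormal_iff_ite]
    intro i k
    have h1 : (inner ℝ (r i) (r k) : ℝ) = ∑ j, C i j * C k j := by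
      simp [PiLp.inner_apply, r, toE, RCLike.inner_apply, WithLp.equiv_symm_apply, PiLp.toLp_apply]
      exact Finset.sum_congr rfl fun j _ => mul_comm _ _
    have h2 := congrFun (congrFun hC i) k
    rw [Matrix.mul_apply] at h2
    simp only [Matrix.transpose_apply, Matrix.one_apply] at h2
    rw [h1, h2]
  set s : Set (Fin (p + m)) := {j : Fin (p + m) | (j : ℕ) < p} with hs
  set v : Fin (p + m) → EuclideanSpace ℝ ι :=
    fun j => if h : (j : ℕ) < p then r ⟨j, h⟩ else 0 with hv
  have hvo : Orthonormal ℝ (s.restrict v) := by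
    have hinj : Function.Injective
        (fun j : s => (⟨(j : Fin (p+m)), j.2⟩ : Fin p)) := by
      intro x y hxy
      have h' := congrArg Fin.val hxy
      simp only [Subtype.ext_iff, Fin.ext_iff]
      exact h' 
    have := hortho.comp _ hinj
    convert this using 1
    funext j
    simp only [Set.restrict_apply, Function.comp_apply, hv]
    show (if h : ((j : Fin (p+m)) : ℕ) < p then r ⟨j, h⟩ else 0) = _
    rw [dif_pos (show ((j : Fin (p+m)) : ℕ) < p from j.2)]
  obtain ⟨b, hb⟩ := hvo.exists_orthonormalBasis_extension_of_card_eq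
    (by rw [finrank_euclideanSpace, hcard, Fintype.card_fin])
  have hfactor : ⇑(matVecL C) = (fun w => (splitFun p m w).1) ∘ ⇑b.repr := by
    funext y
    apply (WithLp.equiv 2 (Fin p → ℝ)).injective
    funext i
    have h3 : (splitFun p m (b.repr y)).1 i = b.repr y (Fin.castAdd m i) := rfl
    have hmem : (Fin.castAdd m i : Fin (p+m)) ∈ s := by
      simp [hs, Fin.coe_castAdd, i.2]
    have h4 : b.repr y (Fin.castAdd m i) = inner ℝ (b (Fin.castAdd m i)) y := by
      rw [b.repr_apply_apply]
    have h5 : b (Fin.castAdd m i) = r i := by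
      rw [hb _ hmem, hv]
      simp only [Fin.coe_castAdd]
      rw [dif_pos i.2]
    have h6 : (inner ℝ (r i) y : ℝ) = ∑ j, C i j * y j := by
      simp [PiLp.inner_apply, r, toE, RCLike.inner_apply, WithLp.equiv_symm_apply, PiLp.toLp_apply]
      exact Finset.sum_congr rfl fun j _ => mul_comm _ _
    show matVecL C y i = (splitFun p m (b.repr y)).1 i
    rw [matVecL_apply, h3, h4, h5, h6]
  rw [hfactor, ← Measure.map_map (by
      exact (measurable_fst.comp (volume_preserving_splitFun p m).measurable))
    b.repr.continuous.measurable]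
  rw [gauss_map_isometry σ b.repr (by rw [hcard, Fintype.card_fin])]
  have : (fun w : EuclideanSpace ℝ (Fin (p+m)) => (splitFun p m w).1)
      = Prod.fst ∘ splitFun p m := rfl
  rw [this, ← Measure.map_map measurable_fst (volume_preserving_splitFun p m).measurable,
    gauss_map_splitFun p m hσ, gauss_map_fst p m hσ]

lemma norm_toE_sq (v : ι → ℝ) : ‖toE v‖ ^ 2 = v ⬝ᵥ v := by
  rw [norm_sq_eq]
  simp [toE, dotProduct, pow_two]

lemma inner_toE (v w : ι → ℝ) : (inner ℝ (toE v) (toE w) : ℝ) = v ⬝ᵥ w := by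
  simp [toE, PiLp.inner_apply, RCLike.inner_apply, dotProduct]
  exact Finset.sum_congr rfl fun j _ => mul_comm _ _

lemma dot_gram {Mn k : ℕ} (C : Matrix (Fin Mn) (Fin k) ℝ) (β : Fin Mn → ℝ) :
    (Cᵀ.mulVec β) ⬝ᵥ (Cᵀ.mulVec β) = β ⬝ᵥ ((C * Cᵀ).mulVec β) := by
  rw [← Matrix.mulVec_mulVec, Matrix.dotProduct_mulVec β, ← Matrix.mulVec_transpose]

/-- vector multiplication into Euclidean space, from a plain pi type -/
noncomputable def vecL {k l : ℕ} (C : Matrix (Fin l) (Fin k) ℝ) :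
    (Fin k → ℝ) →ₗ[ℝ] EuclideanSpace ℝ (Fin l) :=
  (WithLp.linearEquiv 2 ℝ (Fin l → ℝ)).symm.toLinearMap ∘ₗ C.mulVecLin

lemma vecL_apply {k l : ℕ} (C : Matrix (Fin l) (Fin k) ℝ) (β : Fin k → ℝ) :
    vecL C β = toE (C.mulVec β) := rfl

lemma exists_contraction {Mn n p : ℕ} (A : Matrix (Fin Mn) (Fin n) ℝ)
    (B : Matrix (Fin Mn) (Fin p) ℝ) (h : (A * Aᵀ - B * Bᵀ).PosSemidef) :
    ∃ L : Matrix (Fin p) (Fin n) ℝ,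
      (∀ β : Fin Mn → ℝ, L.mulVec (Aᵀ.mulVec β) = Bᵀ.mulVec β) ∧
      (∀ x : EuclideanSpace ℝ (Fin n), ‖matVecL L x‖ ≤ ‖x‖) := by
  classical
  set ψ := vecL Aᵀ with hψ
  set φ := vecL Bᵀ with hφ
  have hle : ∀ β, ‖φ β‖ ≤ ‖ψ β‖ := by
    intro β
    have h2 := h.dotProduct_mulVec_nonneg β
    rw [star_trivial, Matrix.sub_mulVec, dotProduct_sub] at h2
    have hA : ‖ψ β‖ ^ 2 = β ⬝ᵥ ((A * Aᵀ).mulVec β) := by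
      rw [hψ, vecL_apply, norm_toE_sq, dot_gram]
    have hB : ‖φ β‖ ^ 2 = β ⬝ᵥ ((B * Bᵀ).mulVec β) := by
      rw [hφ, vecL_apply, norm_toE_sq, dot_gram]
    have hsq : ‖φ β‖ ^ 2 ≤ ‖ψ β‖ ^ 2 := by rw [hA, hB]; linarith
    have h3 := norm_nonneg (φ β)
    have h4 := norm_nonneg (ψ β)
    nlinarith
  have hker : LinearMap.ker ψ ≤ LinearMap.ker φ := by
    intro β hβ
    rw [LinearMap.mem_ker] at hβ ⊢
    have := hle β
    rw [hβ, norm_zero] at this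
    exact norm_le_zero_iff.mp this
  set V := LinearMap.range ψ with hV
  set S₀ := Submodule.liftQ (LinearMap.ker ψ) φ hker with hS₀
  set S₁ : V →ₗ[ℝ] EuclideanSpace ℝ (Fin p) :=
    S₀ ∘ₗ (ψ.quotKerEquivRange.symm : V ≃ₗ[ℝ] _).toLinearMap with hS₁
  have key : ∀ (β : Fin Mn → ℝ) (hm : ψ β ∈ V), S₁ ⟨ψ β, hm⟩ = φ β := by
    intro β hm
    rw [hS₁]
    simp only [LinearMap.coe_comp, Function.comp_apply, LinearEquiv.coe_coe]
    rw [show (⟨ψ β, hm⟩ : V) = ⟨ψ β, LinearMap.mem_range_self ψ β⟩ from rfl,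
      LinearMap.quotKerEquivRange_symm_apply_image, hS₀, Submodule.mkQ_apply,
      Submodule.liftQ_apply]
  set S : EuclideanSpace ℝ (Fin n) →ₗ[ℝ] EuclideanSpace ℝ (Fin p) :=
    S₁ ∘ₗ (V.orthogonalProjectionOnto : EuclideanSpace ℝ (Fin n) →L[ℝ] V).toLinearMap with hS
  have hS1 : ∀ β, S (ψ β) = φ β := by
    intro β
    rw [hS]
    simp only [LinearMap.coe_comp, Function.comp_apply, ContinuousLinearMap.coe_coe]
    have hm : ψ β ∈ V := LinearMap.mem_range_self ψ β
    rw [show ψ β = ((⟨ψ β, hm⟩ : V) : EuclideanSpace ℝ (Fin n)) from rfl,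
      Submodule.orthogonalProjectionOnto_mem_subspace_eq_self]
    exact key β hm
  have hS2 : ∀ x, ‖S x‖ ≤ ‖x‖ := by
    intro x
    rw [hS]
    simp only [LinearMap.coe_comp, Function.comp_apply, ContinuousLinearMap.coe_coe]
    obtain ⟨β, hβ⟩ := (V.orthogonalProjectionOnto x).2
    have h5 : S₁ (V.orthogonalProjectionOnto x) = φ β := by
      have : V.orthogonalProjectionOnto x = ⟨ψ β, LinearMap.mem_range_self ψ β⟩ :=
        Subtype.ext hβ.symm
      rw [this, key]
    rw [h5]
    calc ‖φ β‖ ≤ ‖ψ β‖ := hle β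
    _ = ‖(V.orthogonalProjectionOnto x : EuclideanSpace ℝ (Fin n))‖ := by rw [hβ]
    _ = ‖V.orthogonalProjectionOnto x‖ := rfl
    _ ≤ 1 * ‖x‖ := by
        refine le_trans ((V.orthogonalProjectionOnto).le_opNorm x) ?_
        exact mul_le_mul_of_nonneg_right (V.orthogonalProjectionOnto_norm_le) (norm_nonneg x)
    _ = ‖x‖ := one_mul _
  set L := LinearMap.toMatrix (EuclideanSpace.basisFun (Fin n) ℝ).toBasis
    (EuclideanSpace.basisFun (Fin p) ℝ).toBasis S with hL
  have hmul : ∀ x : EuclideanSpace ℝ (Fin n),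
      L.mulVec (fun j => x j) = fun i => S x i := by
    intro x
    have h6 := LinearMap.toMatrix_mulVec_repr (EuclideanSpace.basisFun (Fin n) ℝ).toBasis
      (EuclideanSpace.basisFun (Fin p) ℝ).toBasis S x
    have h7 : (⇑((EuclideanSpace.basisFun (Fin n) ℝ).toBasis.repr x) : Fin n → ℝ)
        = fun j => x j := by
      funext j
      rw [OrthonormalBasis.coe_toBasis_repr_apply, EuclideanSpace.basisFun_repr]
    have h8 : (⇑((EuclideanSpace.basisFun (Fin p) ℝ).toBasis.repr (S x)) : Fin p → ℝ)
        = fun i => S x i := by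
      funext i
      rw [OrthonormalBasis.coe_toBasis_repr_apply, EuclideanSpace.basisFun_repr]
    rw [h7, h8] at h6
    exact h6
  refine ⟨L, ?_, ?_⟩
  · intro β
    calc L.mulVec (Aᵀ.mulVec β) = L.mulVec (fun j => (ψ β) j) := rfl
    _ = fun i => S (ψ β) i := hmul _
    _ = fun i => (φ β) i := by rw [hS1]
    _ = Bᵀ.mulVec β := rfl
  · intro x
    have h9 : matVecL L x = S x := by
      apply (WithLp.equiv 2 (Fin p → ℝ)).injective
      funext i
      have h10 := congrFun (hmul x) i
      rw [Matrix.mulVec, dotProduct] at h10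
      rw [show (WithLp.equiv 2 (Fin p → ℝ)) (matVecL L x) i = matVecL L x i from rfl,
        matVecL_apply]
      exact h10
    rw [h9]
    exact hS2 x

lemma posSemidef_one_sub {n p : ℕ} (L : Matrix (Fin p) (Fin n) ℝ)
    (hnorm : ∀ x : EuclideanSpace ℝ (Fin n), ‖matVecL L x‖ ≤ ‖x‖) :
    (1 - L * Lᵀ).PosSemidef := by
  rw [Matrix.posSemidef_iff_dotProduct_mulVec]
  constructor
  · apply Matrix.IsHermitian.sub Matrix.isHermitian_one
    have := Matrix.isHermitian_mul_conjTranspose_self L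
    rwa [Matrix.conjTranspose_eq_transpose_of_trivial] at this
  · intro y
    rw [star_trivial]
    set w := Lᵀ.mulVec y with hw
    have hyLw : ∀ u : Fin n → ℝ, y ⬝ᵥ (L.mulVec u) = w ⬝ᵥ u := by
      intro u
      rw [Matrix.dotProduct_mulVec y L u, hw, Matrix.mulVec_transpose]
    have e1 : y ⬝ᵥ ((1 - L * Lᵀ).mulVec y) = y ⬝ᵥ y - w ⬝ᵥ w := by
      rw [Matrix.sub_mulVec, dotProduct_sub, Matrix.one_mulVec]
      congr 1
      rw [← Matrix.mulVec_mulVec]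
      exact hyLw w
    have hLw : toE (L.mulVec w) = matVecL L (toE w) := by
      apply (WithLp.equiv 2 (Fin p → ℝ)).injective
      funext i
      rw [show (WithLp.equiv 2 (Fin p → ℝ)) (matVecL L (toE w)) i = matVecL L (toE w) i from rfl,
        matVecL_apply]
      simp [toE, Matrix.mulVec, dotProduct]
    have c1 : w ⬝ᵥ w = (inner ℝ (toE y) (toE (L.mulVec w)) : ℝ) := by
      rw [inner_toE]
      exact (hyLw w).symm
    have c2 : (inner ℝ (toE y) (toE (L.mulVec w)) : ℝ) ≤ ‖toE y‖ * ‖toE (L.mulVec w)‖ :=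
      real_inner_le_norm _ _
    have c3 : ‖toE (L.mulVec w)‖ ≤ ‖toE w‖ := by
      rw [hLw]; exact hnorm (toE w)
    have ha : ‖toE w‖ ^ 2 = w ⬝ᵥ w := norm_toE_sq w
    have hb : ‖toE y‖ ^ 2 = y ⬝ᵥ y := norm_toE_sq y
    have han : (0:ℝ) ≤ ‖toE w‖ := norm_nonneg _
    have hbn : (0:ℝ) ≤ ‖toE y‖ := norm_nonneg _
    have hLwn : (0:ℝ) ≤ ‖toE (L.mulVec w)‖ := norm_nonneg _
    rw [e1]
    nlinarith [mul_le_mul_of_nonneg_left c3 hbn]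

lemma bind_kernel_map {X Y Z : Type*} [MeasurableSpace X] [MeasurableSpace Y] [MeasurableSpace Z]
    (ν : Measure Y) [IsProbabilityMeasure ν]
    (R : X × Y → Z) (hR : Measurable R) (μ : Measure X) [SFinite μ] :
    μ.bind (Kernel.map ((Kernel.deterministic (id : X → X) measurable_id) ×ₖ Kernel.const X ν) R)
      = Measure.map R (μ.prod ν) := by
  ext s hs
  rw [Measure.bind_apply hs (Kernel.measurable _).aemeasurable,
    Measure.map_apply hR hs, Measure.prod_apply (hR hs)]
  congr 1
  funext x
  rw [Kernel.map_apply _ hR, Kernel.prod_apply, Kernel.deterministic_apply measurable_id,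
    Kernel.const_apply, Measure.map_apply hR hs, Measure.prod_apply (hR hs),
    lintegral_dirac' _ (measurable_measure_prodMk_left (hR hs))]
  rfl

end BlackwellAux

open BlackwellAux

/-- Blackwell sufficiency of the linear normal experiment with design matrix `A` for the
one with design matrix `B`, under Loewner domination of the Gram matrices. -/
theorem linear_normal_experiment_sufficient
    (M n p : ℕ) (hM : 0 < M) (hn : 0 < n) (hp : 0 < p)
    (A : Matrix (Fin M) (Fin n) ℝ) (B : Matrix (Fin M) (Fin p) ℝ)
    (σ : ℝ) (hσ : 0 < σ)
    (h : (A * Aᵀ - B * Bᵀ).PosSemidef) :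
    ∃ κ : Kernel (EuclideanSpace ℝ (Fin n)) (EuclideanSpace ℝ (Fin p)),
      IsMarkovKernel κ ∧
      ∀ β : Fin M → ℝ,
        (gaussianEuclidean n ((WithLp.equiv 2 (Fin n → ℝ)).symm (Aᵀ.mulVec β)) σ).bind κ =
          gaussianEuclidean p ((WithLp.equiv 2 (Fin p → ℝ)).symm (Bᵀ.mulVec β)) σ := by
  classical
  obtain ⟨L, hLA, hLnorm⟩ := exists_contraction A B h
  have hPS := posSemidef_one_sub L hLnorm
  obtain ⟨Mx, hMxMx⟩ : ∃ Mx : Matrix (Fin p) (Fin p) ℝ, Mx * Mxᵀ = 1 - L * Lᵀ := by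
    open scoped MatrixOrder in
    obtain ⟨X, hX⟩ := CStarAlgebra.nonneg_iff_eq_star_mul_self.mp hPS.nonneg
    refine ⟨star X, ?_⟩
    rw [hX]
    congr 1
  set C : Matrix (Fin p) (Fin (n + p)) ℝ :=
    Matrix.of (fun i j => Fin.addCases (fun j1 => L i j1) (fun j2 => Mx i j2) j) with hCdef
  have hCC : C * Cᵀ = 1 := by
    ext i k
    rw [Matrix.mul_apply]
    have hsum : ∀ j : Fin (n + p), C i j * Cᵀ j k = C i j * C k j := by
      intro j; rw [Matrix.transpose_apply]
    simp_rw [hsum]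
    rw [Fin.sum_univ_add]
    have h1 : ∀ j1 : Fin n, C i (Fin.castAdd p j1) * C k (Fin.castAdd p j1)
        = L i j1 * L k j1 := by
      intro j1; simp [hCdef]
    have h2 : ∀ j2 : Fin p, C i (Fin.natAdd n j2) * C k (Fin.natAdd n j2)
        = Mx i j2 * Mx k j2 := by
      intro j2; simp [hCdef]
    simp_rw [h1, h2]
    have h3 : ∑ j1, L i j1 * L k j1 = (L * Lᵀ) i k := by
      rw [Matrix.mul_apply]; simp [Matrix.transpose_apply]
    have h4 : ∑ j2, Mx i j2 * Mx k j2 = (Mx * Mxᵀ) i k := by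
      rw [Matrix.mul_apply]; simp [Matrix.transpose_apply]
    rw [h3, h4, hMxMx]
    simp [Matrix.sub_apply]
  haveI hGp : IsProbabilityMeasure (gauss (Fin p) σ) := gauss_prob hσ
  haveI hGn : IsProbabilityMeasure (gauss (Fin n) σ) := gauss_prob hσ
  set Rf : EuclideanSpace ℝ (Fin n) × EuclideanSpace ℝ (Fin p) → EuclideanSpace ℝ (Fin p) :=
    fun q => matVecL L q.1 + matVecL Mx q.2 with hRfdef
  have hRmeas : Measurable Rf :=
    (((continuous_matVecL L).comp continuous_fst).add
      ((continuous_matVecL Mx).comp continuous_snd)).measurable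
  refine ⟨Kernel.map (Kernel.deterministic id measurable_id ×ₖ
    Kernel.const _ (gauss (Fin p) σ)) Rf, Kernel.IsMarkovKernel.map _ hRmeas, ?_⟩
  intro β
  set a : EuclideanSpace ℝ (Fin n) := toE (Aᵀ.mulVec β) with hadef
  set bb : EuclideanSpace ℝ (Fin p) := toE (Bᵀ.mulVec β) with hbbdef
  show (gaussianEuclidean n a σ).bind _ = gaussianEuclidean p bb σ
  rw [gaussianEuclidean_eq n a σ, gaussianEuclidean_eq p bb σ]
  haveI : IsProbabilityMeasure (Measure.map (· + a) (gauss (Fin n) σ)) :=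
    Measure.isProbabilityMeasure_map (measurable_add_const a).aemeasurable
  rw [bind_kernel_map _ Rf hRmeas _]
  have hshift : (Measure.map (· + a) (gauss (Fin n) σ)).prod (gauss (Fin p) σ)
      = Measure.map (Prod.map (· + a) id) ((gauss (Fin n) σ).prod (gauss (Fin p) σ)) := by
    conv_lhs => rw [← Measure.map_id (μ := gauss (Fin p) σ)]
    exact Measure.map_prod_map _ _ (measurable_add_const a) measurable_id
  have hpm : Measurable (Prod.map (· + a) (id : EuclideanSpace ℝ (Fin p) → _)) :=
    Measurable.prodMap (measurable_add_const a) measurable_id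
  rw [hshift, Measure.map_map hRmeas hpm]
  have hcomp : Rf ∘ Prod.map (· + a) id = (· + matVecL L a) ∘ Rf := by
    funext q
    show matVecL L (q.1 + a) + matVecL Mx q.2 = (matVecL L q.1 + matVecL Mx q.2) + matVecL L a
    rw [map_add]
    abel
  rw [hcomp, ← Measure.map_map (measurable_add_const (matVecL L a)) hRmeas]
  have hmain : Measure.map Rf ((gauss (Fin n) σ).prod (gauss (Fin p) σ)) = gauss (Fin p) σ := by
    rw [← gauss_map_splitFun n p hσ,
      Measure.map_map hRmeas (volume_preserving_splitFun n p).measurable]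
    have hRsplit : Rf ∘ splitFun n p = ⇑(matVecL C) := by
      funext x
      apply (WithLp.equiv 2 (Fin p → ℝ)).injective
      funext i
      show Rf (splitFun n p x) i = matVecL C x i
      rw [matVecL_apply]
      rw [Fin.sum_univ_add]
      have h1 : Rf (splitFun n p x) i
          = matVecL L (splitFun n p x).1 i + matVecL Mx (splitFun n p x).2 i := rfl
      rw [h1, matVecL_apply, matVecL_apply]
      congr 1
      · apply Finset.sum_congr rfl
        intro j _
        simp [hCdef, splitFun]
      · apply Finset.sum_congr rfl
        intro j _
        simp [hCdef, splitFun]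
    rw [hRsplit]
    exact gauss_map_matVec (m := n) (by simp [Fintype.card_fin]; omega) hσ C hCC
  rw [hmain]
  have hLa : matVecL L a = bb := by
    apply (WithLp.equiv 2 (Fin p → ℝ)).injective
    funext i
    show matVecL L a i = bb i
    rw [matVecL_apply]
    have h5 := congrFun (hLA β) i
    rw [Matrix.mulVec, dotProduct] at h5
    exact h5
  rw [hLa]
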